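/- For α ∈ (0,1), a strategy profile s in a network creation game is a strong equilibrium if and only if s is rational and G(s) is the complete graph K_n. -/

import Mathlib

open SimpleGraph ENNReal Finset

/-- A strategy profile: each player chooses a set of other players. -/
abbrev Profile (n : ℕ) := Fin n → Finset (Fin n)

/-- Validity: no player buys an edge to herself. -/
def Valid {n : ℕ} (s : Profile n) : Prop := ∀ i, i ∉ s i

/-- The graph formed by a strategy profile: `{i,j}` is an edge iff `j ∈ s i` or `i ∈ s j`. -/
def NCGraph {n : ℕ} (s : Profile n) : SimpleGraph (Fin n) :=
  SimpleGraph.fromRel (fun i j => j ∈ s i)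

instance {n : ℕ} (s : Profile n) : DecidableRel (NCGraph s).Adj := fun i j =>
  decidable_of_iff (i ≠ j ∧ (j ∈ s i ∨ i ∈ s j))
    (SimpleGraph.fromRel_adj (fun a b => b ∈ s a) i j).symm

/-- Distance cost of player `i`: sum of (extended) distances to all players. -/
noncomputable def dCost {n : ℕ} (s : Profile n) (i : Fin n) : ℝ≥0∞ :=
  ∑ j, ((NCGraph s).edist i j : ℝ≥0∞)

/-- Total cost of player `i` in the network creation game with parameter `α`. -/
noncomputable def cost {n : ℕ} (α : ℝ) (s : Profile n) (i : Fin n) : ℝ≥0∞ :=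
  ENNReal.ofReal α * (s i).card + dCost s i

/-- Social cost: sum of all players' costs. -/
noncomputable def socialCost {n : ℕ} (α : ℝ) (s : Profile n) : ℝ≥0∞ :=
  ∑ i, cost α s i

/-- A profile is rational if no edge is bought by both of its endpoints. -/
def Rational {n : ℕ} (s : Profile n) : Prop := ∀ i j, j ∈ s i → i ∉ s j

/-- Pure Nash equilibrium. -/
def IsNashEq {n : ℕ} (α : ℝ) (s : Profile n) : Prop :=
  ∀ (i : Fin n) (t : Finset (Fin n)), i ∉ t →
    cost α s i ≤ cost α (Function.update s i t) i

/-- Strong equilibrium: no nonempty coalition has a joint deviation strictly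
decreasing every member's cost. -/
def IsStrongEq {n : ℕ} (α : ℝ) (s : Profile n) : Prop :=
  ∀ (K : Finset (Fin n)) (s' : Profile n), K.Nonempty → Valid s' →
    (∀ i ∉ K, s' i = s i) → ∃ i ∈ K, cost α s i ≤ cost α s' i

/-- A star graph: one center adjacent to all other vertices, and no other edges. -/
def IsStar {V : Type*} (G : SimpleGraph V) : Prop :=
  ∃ c : V, ∀ i j : V, G.Adj i j ↔ i ≠ j ∧ (i = c ∨ j = c)

def missN {n : ℕ} (s : Profile n) (i : Fin n) : Finset (Fin n) :=
  Finset.univ.filter (fun j => i ≠ j ∧ ¬ (NCGraph s).Adj i j)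

lemma adj_iff {n : ℕ} (s : Profile n) (i j : Fin n) :
    (NCGraph s).Adj i j ↔ i ≠ j ∧ (j ∈ s i ∨ i ∈ s j) :=
  SimpleGraph.fromRel_adj _ i j

lemma two_le_enat {x : ℕ∞} (h0 : x ≠ 0) (h1 : x ≠ 1) : 2 ≤ x := by
  cases x with
  | top => exact le_top
  | coe m =>
    have : 2 ≤ m := by
      rcases m with _ | _ | m <;> simp_all
    exact_mod_cast this

lemma edist_lb {n : ℕ} (s : Profile n) (i j : Fin n) :
    ((if i = j then 0 else 1) + (if i ≠ j ∧ ¬(NCGraph s).Adj i j then 1 else 0) : ℝ≥0∞)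
      ≤ ((NCGraph s).edist i j : ℝ≥0∞) := by
  by_cases hij : i = j
  · simp [hij]
  · by_cases hadj : (NCGraph s).Adj i j
    · simp only [if_neg hij, hadj, not_true, and_false, if_false, add_zero]
      have h0 : (NCGraph s).edist i j ≠ 0 :=
        fun h => hij (SimpleGraph.edist_eq_zero_iff.mp h)
      have : (1 : ℕ∞) ≤ (NCGraph s).edist i j := ENat.one_le_iff_ne_zero.mpr h0
      exact_mod_cast this
    · have h0 : (NCGraph s).edist i j ≠ 0 :=
        fun h => hij (SimpleGraph.edist_eq_zero_iff.mp h)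
      have h1 : (NCGraph s).edist i j ≠ 1 :=
        fun h => hadj (SimpleGraph.edist_eq_one_iff_adj.mp h)
      have h2 : (2 : ℕ∞) ≤ (NCGraph s).edist i j := two_le_enat h0 h1
      have h2' : ((2:ℕ∞) : ℝ≥0∞) ≤ ((NCGraph s).edist i j : ℝ≥0∞) := by exact_mod_cast h2
      refine le_trans (le_of_eq ?_) h2'
      simp [hij, hadj]
      norm_num

lemma dCost_lb {n : ℕ} (s : Profile n) (i : Fin n) :
    ((n - 1 : ℕ) : ℝ≥0∞) + (missN s i).card ≤ dCost s i := by
  have h1 : ∑ j, ((if i = j then 0 else 1) + (if i ≠ j ∧ ¬(NCGraph s).Adj i j then 1 else 0) : ℝ≥0∞)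
      ≤ dCost s i := Finset.sum_le_sum (fun j _ => edist_lb s i j)
  refine le_trans (le_of_eq ?_) h1
  rw [Finset.sum_add_distrib]
  congr 1
  · have : ∀ j : Fin n, (if i = j then (0:ℝ≥0∞) else 1) = (if i ≠ j then 1 else 0) := by
      intro j; by_cases h : i = j <;> simp [h]
    rw [Finset.sum_congr rfl (fun j _ => this j), Finset.sum_boole]
    congr 1
    have : Finset.univ.filter (fun j => i ≠ j) = Finset.univ.erase i := by
      ext j; simp [eq_comm, Finset.mem_erase]
    rw [this, Finset.card_erase_of_mem (Finset.mem_univ i)]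
    simp
  · rw [Finset.sum_boole]; rfl

lemma dCost_top {n : ℕ} (s : Profile n) (hc : NCGraph s = ⊤) (i : Fin n) :
    dCost s i = ((n - 1 : ℕ) : ℝ≥0∞) := by
  unfold dCost
  rw [hc]
  have : ∀ j : Fin n, (((⊤ : SimpleGraph (Fin n)).edist i j : ℝ≥0∞)) = (if i ≠ j then 1 else 0) := by
    intro j
    rw [SimpleGraph.edist_top]
    by_cases h : i = j <;> simp [h]
  rw [Finset.sum_congr rfl (fun j _ => this j), Finset.sum_boole]
  have : Finset.univ.filter (fun j => i ≠ j) = Finset.univ.erase i := by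
    ext j; simp [eq_comm, Finset.mem_erase]
  rw [this, Finset.card_erase_of_mem (Finset.mem_univ i)]
  simp

lemma card_eq_sum' {n : ℕ} (t : Finset (Fin n)) :
    t.card = ∑ j, if j ∈ t then 1 else 0 := by
  rw [Finset.sum_ite_mem, Finset.univ_inter, Finset.sum_const, smul_eq_mul, mul_one]

lemma count_key {n : ℕ} (s s' : Profile n) (hv : Valid s) (hr : Rational s)
    (K : Finset (Fin n)) (hoff : ∀ i ∉ K, s' i = s i) :
    ∑ i ∈ K, (s i).card ≤ ∑ i ∈ K, (s' i).card + ∑ i ∈ K, (missN s' i).card := by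
  have key : ∀ i j : Fin n,
      ((if j ∈ s i then 1 else 0) + (if i ∈ s j then 1 else 0) : ℕ)
      ≤ ((if j ∈ s' i then 1 else 0) + (if i ∈ s' j then 1 else 0))
        + ((if i ∈ K ∧ i ≠ j ∧ ¬(NCGraph s').Adj i j then 1 else 0)
          + (if j ∈ K ∧ j ≠ i ∧ ¬(NCGraph s').Adj j i then 1 else 0)) := by
    intro i j
    by_cases hij : i = j
    · subst hij; simp [hv i]
    · have hLHS : ((if j ∈ s i then 1 else 0) + (if i ∈ s j then 1 else 0) : ℕ) ≤ 1 := by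
        by_cases h : j ∈ s i
        · simp [h, hr i j h]
        · simp only [h, if_neg (fun h => h)]
          split <;> omega
      by_cases hadj : (NCGraph s').Adj i j
      · have h2 : j ∈ s' i ∨ i ∈ s' j := ((adj_iff s' i j).mp hadj).2
        have h3 : 1 ≤ ((if j ∈ s' i then 1 else 0) + (if i ∈ s' j then 1 else 0) : ℕ) := by
          rcases h2 with h | h <;> simp [h]
        omega
      · by_cases hK : i ∈ K
        · have h4 : (if i ∈ K ∧ i ≠ j ∧ ¬(NCGraph s').Adj i j then 1 else 0) = 1 := by
            simp [hK, hij, hadj]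
          omega
        · by_cases hK' : j ∈ K
          · have hadj' : ¬ (NCGraph s').Adj j i := fun h => hadj h.symm
            have h4 : (if j ∈ K ∧ j ≠ i ∧ ¬(NCGraph s').Adj j i then 1 else 0) = 1 := by
              simp [hK', Ne.symm hij, hadj']
            omega
          · have e1 : s' i = s i := hoff i hK
            have e2 : s' j = s j := hoff j hK'
            have hnotsi : j ∉ s i := by
              intro h; exact hadj ((adj_iff s' i j).mpr ⟨hij, Or.inl (e1 ▸ h)⟩)
            have hnotsj : i ∉ s j := by
              intro h; exact hadj ((adj_iff s' i j).mpr ⟨hij, Or.inr (e2 ▸ h)⟩)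
            simp [hnotsi, hnotsj]
  have hsum : ∑ i : Fin n, ∑ j : Fin n,
      (((if j ∈ s i then 1 else 0) + (if i ∈ s j then 1 else 0) : ℕ))
      ≤ ∑ i : Fin n, ∑ j : Fin n,
      (((if j ∈ s' i then 1 else 0) + (if i ∈ s' j then 1 else 0))
        + ((if i ∈ K ∧ i ≠ j ∧ ¬(NCGraph s').Adj i j then 1 else 0)
          + (if j ∈ K ∧ j ≠ i ∧ ¬(NCGraph s').Adj j i then 1 else 0))) :=
    Finset.sum_le_sum fun i _ => Finset.sum_le_sum fun j _ => key i j
  have hswap : ∀ t : Profile n, ∑ i : Fin n, ∑ j : Fin n, ((if i ∈ t j then 1 else 0) : ℕ)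
      = ∑ i : Fin n, (t i).card := by
    intro t
    rw [Finset.sum_comm]
    exact Finset.sum_congr rfl fun j _ => (card_eq_sum' (t j)).symm
  have hself : ∀ t : Profile n, ∑ i : Fin n, ∑ j : Fin n, ((if j ∈ t i then 1 else 0) : ℕ)
      = ∑ i : Fin n, (t i).card :=
    fun t => Finset.sum_congr rfl fun i _ => (card_eq_sum' (t i)).symm
  have hmiss1 : ∑ i : Fin n, ∑ j : Fin n,
      ((if i ∈ K ∧ i ≠ j ∧ ¬(NCGraph s').Adj i j then 1 else 0) : ℕ)
      = ∑ i ∈ K, (missN s' i).card := by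
    have h1 : ∀ i : Fin n, ∑ j : Fin n,
        ((if i ∈ K ∧ i ≠ j ∧ ¬(NCGraph s').Adj i j then 1 else 0) : ℕ)
        = if i ∈ K then (missN s' i).card else 0 := by
      intro i
      by_cases hK : i ∈ K
      · simp only [hK, true_and, if_pos]
        rw [missN, Finset.card_filter]
      · simp [hK]
    rw [Finset.sum_congr rfl fun i _ => h1 i, Finset.sum_ite_mem, Finset.univ_inter]
  have hmiss2 : ∑ i : Fin n, ∑ j : Fin n,
      ((if j ∈ K ∧ j ≠ i ∧ ¬(NCGraph s').Adj j i then 1 else 0) : ℕ)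
      = ∑ i ∈ K, (missN s' i).card := by
    rw [Finset.sum_comm]; exact hmiss1
  simp only [Finset.sum_add_distrib] at hsum
  rw [hself s, hswap s, hself s', hswap s', hmiss1, hmiss2] at hsum
  have hdecomp : ∀ t : Profile n, ∑ i : Fin n, (t i).card
      = ∑ i ∈ K, (t i).card + ∑ i ∈ Finset.univ \ K, (t i).card := by
    intro t
    rw [← Finset.sum_sdiff (Finset.subset_univ K)]; ring
  have hoff' : ∑ i ∈ Finset.univ \ K, (s' i).card = ∑ i ∈ Finset.univ \ K, (s i).card :=
    Finset.sum_congr rfl fun i hi => by rw [hoff i (Finset.mem_sdiff.mp hi).2]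
  rw [hdecomp s, hdecomp s', hoff'] at hsum
  omega

/-- normalize `ofReal α * k + l` -/
lemma norm_form {α : ℝ} (hα0 : 0 ≤ α) (k l : ℕ) :
    ENNReal.ofReal α * (k : ℝ≥0∞) + ((l : ℕ) : ℝ≥0∞) = ENNReal.ofReal (α * k + l) := by
  rw [ENNReal.ofReal_add (by positivity) (Nat.cast_nonneg l), ENNReal.ofReal_mul hα0,
    ENNReal.ofReal_natCast, ENNReal.ofReal_natCast]

lemma norm_form2 {α : ℝ} (hα0 : 0 ≤ α) (k l m : ℕ) :
    ENNReal.ofReal α * (k : ℝ≥0∞) + (((l : ℕ) : ℝ≥0∞) + ((m : ℕ) : ℝ≥0∞))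
      = ENNReal.ofReal (α * k + (l + m)) := by
  rw [ENNReal.ofReal_add (by positivity) (by positivity), ENNReal.ofReal_mul hα0,
    ENNReal.ofReal_add (Nat.cast_nonneg l) (Nat.cast_nonneg m),
    ENNReal.ofReal_natCast, ENNReal.ofReal_natCast, ENNReal.ofReal_natCast]

/-- For `α ∈ (0,1)`, a profile is a strong equilibrium iff it is rational and
forms the complete graph. -/
theorem stmt8 {n : ℕ} (hn : 3 ≤ n) (α : ℝ) (hα0 : 0 < α) (hα : α < 1)
    (s : Profile n) (hv : Valid s) :
    IsStrongEq α s ↔ Rational s ∧ NCGraph s = ⊤ := by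
  constructor
  · intro hs
    have hcomp : NCGraph s = ⊤ := by
      by_contra hne
      obtain ⟨i0, j0, hij0, hnadj0⟩ : ∃ i j, i ≠ j ∧ ¬ (NCGraph s).Adj i j := by
        by_contra h; push_neg at h
        apply hne
        ext a b
        simp only [SimpleGraph.top_adj]
        exact ⟨fun h' => h'.ne, fun hne' => h a b hne'⟩
      set K : Finset (Fin n) :=
        Finset.univ.filter (fun i => ∃ j, i ≠ j ∧ ¬(NCGraph s).Adj i j) with hK
      set s'' : Profile n :=
        fun i => s i ∪ Finset.univ.filter (fun j => i < j ∧ ¬(NCGraph s).Adj i j) with hs''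
      have hKne : K.Nonempty := by
        refine ⟨i0, ?_⟩
        simp only [hK, Finset.mem_filter, Finset.mem_univ, true_and]
        exact ⟨j0, hij0, hnadj0⟩
      have hv'' : Valid s'' := by
        intro i
        simp only [hs'', Finset.mem_union, Finset.mem_filter, Finset.mem_univ, true_and]
        push_neg
        exact ⟨hv i, fun h => absurd h (lt_irrefl i)⟩
      have hoff'' : ∀ i ∉ K, s'' i = s i := by
        intro i hi
        simp only [hK, Finset.mem_filter, Finset.mem_univ, true_and] at hi
        push_neg at hi
        have hemp : Finset.univ.filter (fun j => i < j ∧ ¬(NCGraph s).Adj i j) = ∅ := by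
          ext j
          simp only [Finset.mem_filter, Finset.mem_univ, true_and, Finset.notMem_empty, iff_false]
          rintro ⟨hlt, hna⟩; exact hna (hi j (ne_of_lt hlt))
        simp [hs'', hemp]
      have hcomp'' : NCGraph s'' = ⊤ := by
        ext a b
        simp only [SimpleGraph.top_adj]
        refine ⟨fun h => h.ne, fun hab => ?_⟩
        rw [adj_iff]
        refine ⟨hab, ?_⟩
        by_cases hadj : (NCGraph s).Adj a b
        · rcases ((adj_iff s a b).mp hadj).2 with h | h
          · exact Or.inl (Finset.mem_union_left _ h)
          · exact Or.inr (Finset.mem_union_left _ h)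
        · rcases lt_or_gt_of_ne hab with hlt | hlt
          · refine Or.inl (Finset.mem_union_right _ ?_)
            simp only [Finset.mem_filter, Finset.mem_univ, true_and]
            exact ⟨hlt, hadj⟩
          · have hadj' : ¬ (NCGraph s).Adj b a := fun h => hadj h.symm
            refine Or.inr (Finset.mem_union_right _ ?_)
            simp only [Finset.mem_filter, Finset.mem_univ, true_and]
            exact ⟨hlt, hadj'⟩
      obtain ⟨i, hiK, hle⟩ := hs K s'' hKne hv'' hoff''
      have hiK' : ∃ j, i ≠ j ∧ ¬(NCGraph s).Adj i j := by
        simpa only [hK, Finset.mem_filter, Finset.mem_univ, true_and] using hiK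
      obtain ⟨j, hij, hnadj⟩ := hiK'
      have hm1 : 1 ≤ (missN s i).card := by
        refine Finset.card_pos.mpr ⟨j, ?_⟩
        simp only [missN, Finset.mem_filter, Finset.mem_univ, true_and]
        exact ⟨hij, hnadj⟩
      have hcard'' : (s'' i).card ≤ (s i).card + (missN s i).card := by
        refine le_trans (Finset.card_union_le _ _) ?_
        refine add_le_add_right (Finset.card_le_card ?_) _
        intro k hk
        simp only [Finset.mem_filter, Finset.mem_univ, true_and] at hk
        simp only [missN, Finset.mem_filter, Finset.mem_univ, true_and]
        exact ⟨ne_of_lt hk.1, hk.2⟩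
      have hub : cost α s'' i
          ≤ ENNReal.ofReal (α * (((s i).card + (missN s i).card : ℕ) : ℝ) + (n - 1 : ℕ)) := by
        rw [cost, dCost_top s'' hcomp'', ← norm_form hα0.le]
        exact add_le_add_left (mul_le_mul_right (by exact_mod_cast hcard'') _) _
      have hlb : ENNReal.ofReal (α * (s i).card + ((n - 1 : ℕ) + (missN s i).card))
          ≤ cost α s i := by
        rw [← norm_form2 hα0.le, cost]
        exact add_le_add_right (dCost_lb s i) _
      have hchain := le_trans hlb (le_trans hle hub)
      have hreal := (ENNReal.ofReal_le_ofReal_iff (by positivity)).mp hchain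
      push_cast at hreal
      have hm1' : (1:ℝ) ≤ ((missN s i).card : ℝ) := by exact_mod_cast hm1
      nlinarith [hm1', hreal]
    refine ⟨?_, hcomp⟩
    intro i j hji
    by_contra hij'
    have hij : i ≠ j := fun h => hv i (by rw [h] at hji ⊢; exact hji)
    set s'' : Profile n := Function.update s i ((s i).erase j) with hs''
    have hv'' : Valid s'' := by
      intro k
      by_cases hk : k = i
      · subst hk
        rw [hs'', Function.update_self]
        exact fun h => hv k (Finset.mem_of_mem_erase h)
      · rw [hs'', Function.update_of_ne hk]; exact hv k
    have hoff'' : ∀ k ∉ ({i} : Finset (Fin n)), s'' k = s k := by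
      intro k hk
      rw [Finset.mem_singleton] at hk
      rw [hs'', Function.update_of_ne hk]
    have hcomp'' : NCGraph s'' = ⊤ := by
      ext a b
      simp only [SimpleGraph.top_adj]
      refine ⟨fun h => h.ne, fun hab => ?_⟩
      rw [adj_iff]
      refine ⟨hab, ?_⟩
      have hadj : (NCGraph s).Adj a b := by rw [hcomp]; exact hab
      rcases ((adj_iff s a b).mp hadj).2 with h | h
      · by_cases ha : a = i
        · subst ha
          by_cases hb : b = j
          · subst hb
            exact Or.inr (by rw [hs'', Function.update_of_ne (Ne.symm hij)]; exact hij')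
          · refine Or.inl ?_
            rw [hs'', Function.update_self]
            exact Finset.mem_erase.mpr ⟨hb, h⟩
        · exact Or.inl (by rw [hs'', Function.update_of_ne ha]; exact h)
      · by_cases hb : b = i
        · subst hb
          by_cases ha : a = j
          · subst ha
            exact Or.inl (by rw [hs'', Function.update_of_ne (Ne.symm hij)]; exact hij')
          · refine Or.inr ?_
            rw [hs'', Function.update_self]
            exact Finset.mem_erase.mpr ⟨ha, h⟩
        · exact Or.inr (by rw [hs'', Function.update_of_ne hb]; exact h)
    obtain ⟨k, hk, hle⟩ := hs {i} s'' ⟨i, Finset.mem_singleton_self i⟩ hv'' hoff''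
    rw [Finset.mem_singleton] at hk
    subst hk
    have hb1 : 1 ≤ (s k).card := Finset.card_pos.mpr ⟨j, hji⟩
    have hc1 : cost α s k = ENNReal.ofReal (α * (s k).card + (n - 1 : ℕ)) := by
      rw [cost, dCost_top s hcomp, norm_form hα0.le]
    have hc2 : cost α s'' k = ENNReal.ofReal (α * ((s k).card - 1 : ℕ) + (n - 1 : ℕ)) := by
      rw [cost, dCost_top s'' hcomp'', ← norm_form hα0.le]
      congr 3
      rw [hs'', Function.update_self, Finset.card_erase_of_mem hji]
    have hstrict : cost α s'' k < cost α s k := by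
      rw [hc1, hc2]
      apply (ENNReal.ofReal_lt_ofReal_iff (by positivity)).mpr
      have : ((s k).card - 1 : ℕ) < ((s k).card : ℝ) := by
        have : ((s k).card - 1 : ℕ) < (s k).card := by omega
        exact_mod_cast this
      nlinarith
    exact absurd hle (not_le.mpr hstrict)
  · rintro ⟨hr, hc⟩
    intro K s' hKne hv' hoff
    by_contra h
    push_neg at h
    have key : ∀ i ∈ K,
        α * ((s' i).card : ℝ) + ((missN s' i).card : ℝ) < α * ((s i).card : ℝ) := by
      intro i hi
      have hlt := h i hi
      have hlb : ENNReal.ofReal (α * (s' i).card + ((n - 1 : ℕ) + (missN s' i).card))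
          ≤ cost α s' i := by
        rw [← norm_form2 hα0.le, cost]
        exact add_le_add_right (dCost_lb s' i) _
      have hub : cost α s i = ENNReal.ofReal (α * (s i).card + (n - 1 : ℕ)) := by
        rw [cost, dCost_top s hc, norm_form hα0.le]
      have hchain : ENNReal.ofReal (α * (s' i).card + ((n - 1 : ℕ) + (missN s' i).card))
          < ENNReal.ofReal (α * (s i).card + (n - 1 : ℕ)) :=
        lt_of_le_of_lt hlb (hlt.trans_eq hub)
      have hreal := (ENNReal.ofReal_lt_ofReal_iff_of_nonneg (by positivity)).mp hchain
      linarith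
    have hsum := Finset.sum_lt_sum_of_nonempty hKne key
    rw [Finset.sum_add_distrib, ← Finset.mul_sum, ← Finset.mul_sum] at hsum
    have hcount := count_key s s' hv hr K hoff
    have hcount' : (∑ i ∈ K, ((s i).card : ℝ))
        ≤ (∑ i ∈ K, ((s' i).card : ℝ)) + (∑ i ∈ K, ((missN s' i).card : ℝ)) := by
      have := (Nat.cast_le (α := ℝ)).mpr hcount
      push_cast at this
      linarith
    have hMnn : (0:ℝ) ≤ ∑ i ∈ K, ((missN s' i).card : ℝ) :=
      Finset.sum_nonneg fun i _ => Nat.cast_nonneg _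
    nlinarith [hsum, hcount', hMnn]
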